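/- (The infimum price characterization of the convex hull price.) Let G > 0, n ≥ 1, and for each i ∈ {1,…,n} let fᵢ : ℝ → ℝ be convex on [0,G] and Lipschitz on [0,G]. Fix a demand level y with 0 < y ≤ n·G, and define p' = inf { p ∈ ℝ : ∑ᵢ sup Dᵢ(p) ≥ y }. Then this infimum exists (the set is nonempty and bounded below) and p' supports y: there exist z₁,…,zₙ with zᵢ ∈ Dᵢ(p') for each i and ∑ᵢ zᵢ = y. -/

import Mathlib

open Set Filter

def demandSet (f : ℝ → ℝ) (G p : ℝ) : Set ℝ :=
  {z ∈ Set.Icc (0 : ℝ) G | ∀ w ∈ Set.Icc (0 : ℝ) G, p * z - f z ≥ p * w - f w}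

section helpers
variable {f : ℝ → ℝ} {G : ℝ}

lemma demand_subset (p : ℝ) : demandSet f G p ⊆ Icc 0 G := fun _ hz => hz.1

lemma profit_continuousOn (hf : ContinuousOn f (Icc 0 G)) (p : ℝ) :
    ContinuousOn (fun z => p * z - f z) (Icc (0:ℝ) G) :=
  (continuousOn_const.mul continuousOn_id).sub hf

lemma demand_nonempty (hG : 0 ≤ G) (hf : ContinuousOn f (Icc 0 G)) (p : ℝ) :
    (demandSet f G p).Nonempty := by
  obtain ⟨z, hz, hmax⟩ := isCompact_Icc.exists_isMaxOn (nonempty_Icc.2 hG)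
    (profit_continuousOn hf p)
  exact ⟨z, hz, fun w hw => hmax hw⟩

lemma demand_isClosed (hG : 0 ≤ G) (hf : ContinuousOn f (Icc 0 G)) (p : ℝ) :
    IsClosed (demandSet f G p) := by
  have heq : demandSet f G p =
      ⋂ w ∈ Icc (0:ℝ) G, (Icc (0:ℝ) G ∩ (fun z => p * z - f z) ⁻¹' Ici (p * w - f w)) := by
    ext z
    simp only [demandSet, mem_setOf_eq, mem_iInter, mem_inter_iff, mem_preimage, mem_Ici]
    constructor
    · rintro ⟨hz, h⟩ w hw
      exact ⟨hz, h w hw⟩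
    · intro h
      refine ⟨(h 0 (left_mem_Icc.2 hG)).1, fun w hw => (h w hw).2⟩
  rw [heq]
  exact isClosed_biInter fun w _ =>
    (profit_continuousOn hf p).preimage_isClosed_of_isClosed isClosed_Icc isClosed_Ici

lemma demand_isCompact (hG : 0 ≤ G) (hf : ContinuousOn f (Icc 0 G)) (p : ℝ) :
    IsCompact (demandSet f G p) :=
  isCompact_Icc.of_isClosed_subset (demand_isClosed hG hf p) (demand_subset p)

lemma demand_sSup_mem (hG : 0 ≤ G) (hf : ContinuousOn f (Icc 0 G)) (p : ℝ) :
    sSup (demandSet f G p) ∈ demandSet f G p :=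
  (demand_isCompact hG hf p).sSup_mem (demand_nonempty hG hf p)

lemma demand_sInf_mem (hG : 0 ≤ G) (hf : ContinuousOn f (Icc 0 G)) (p : ℝ) :
    sInf (demandSet f G p) ∈ demandSet f G p :=
  (demand_isCompact hG hf p).sInf_mem (demand_nonempty hG hf p)

lemma demand_bddAbove (p : ℝ) : BddAbove (demandSet f G p) :=
  ⟨G, fun z hz => hz.1.2⟩

lemma demand_bddBelow (p : ℝ) : BddBelow (demandSet f G p) :=
  ⟨0, fun z hz => hz.1.1⟩

lemma demand_mono {p q : ℝ} (hpq : p < q) {z w : ℝ}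
    (hz : z ∈ demandSet f G p) (hw : w ∈ demandSet f G q) : z ≤ w := by
  have h1 := hz.2 w hw.1
  have h2 := hw.2 z hz.1
  nlinarith

lemma demand_sSup_mono (hG : 0 ≤ G) (hf : ContinuousOn f (Icc 0 G)) {p q : ℝ} (hpq : p ≤ q) :
    sSup (demandSet f G p) ≤ sSup (demandSet f G q) := by
  rcases eq_or_lt_of_le hpq with rfl | h
  · exact le_rfl
  · exact demand_mono h (demand_sSup_mem hG hf p) (demand_sSup_mem hG hf q)

lemma demand_convex (hconv : ConvexOn ℝ (Icc (0:ℝ) G) f) (p : ℝ) :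
    Convex ℝ (demandSet f G p) := by
  have h1 : ConcaveOn ℝ (Icc (0:ℝ) G) (fun z => p * z) :=
    ⟨convex_Icc 0 G, fun x _ y _ a b _ _ _ => by simp [smul_eq_mul]; ring_nf; exact le_rfl⟩
  have hconc : ConcaveOn ℝ (Icc (0:ℝ) G) (fun z => p * z - f z) := h1.sub hconv
  intro z hz w hw a b ha hb hab
  have hmem : a • z + b • w ∈ Icc (0:ℝ) G := (convex_Icc 0 G) hz.1 hw.1 ha hb hab
  refine ⟨hmem, fun u hu => ?_⟩
  have hc := hconc.2 hz.1 hw.1 ha hb hab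
  have h1' := hz.2 u hu
  have h2' := hw.2 u hu
  simp only [smul_eq_mul] at hc ⊢
  have ha1 : a * (p * u - f u) ≤ a * (p * z - f z) := mul_le_mul_of_nonneg_left h1' ha
  have hb1 : b * (p * u - f u) ≤ b * (p * w - f w) := mul_le_mul_of_nonneg_left h2' hb
  have hsum : a * (p * u - f u) + b * (p * u - f u) = p * u - f u := by
    rw [← add_mul, hab, one_mul]
  linarith

lemma demand_limit (hf : ContinuousOn f (Icc 0 G))
    {pk : ℕ → ℝ} {zk : ℕ → ℝ} {p z : ℝ}
    (hp : Tendsto pk atTop (nhds p))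
    (hz : Tendsto zk atTop (nhds z))
    (hmem : ∀ k, zk k ∈ demandSet f G (pk k)) :
    z ∈ demandSet f G p := by
  have hzIcc : ∀ k, zk k ∈ Icc (0:ℝ) G := fun k => (hmem k).1
  have hzlim : z ∈ Icc (0:ℝ) G :=
    isClosed_Icc.mem_of_tendsto hz (Filter.Eventually.of_forall hzIcc)
  have hzw : Tendsto zk atTop (nhdsWithin z (Icc (0:ℝ) G)) :=
    tendsto_nhdsWithin_of_tendsto_nhds_of_eventually_within zk hz
      (Filter.Eventually.of_forall hzIcc)
  have hfz : Tendsto (fun k => f (zk k)) atTop (nhds (f z)) := (hf z hzlim).tendsto.comp hzw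
  refine ⟨hzlim, fun w hw => ?_⟩
  have hL : Tendsto (fun k => pk k * zk k - f (zk k)) atTop (nhds (p * z - f z)) :=
    (hp.mul hz).sub hfz
  have hR : Tendsto (fun k => pk k * w - f w) atTop (nhds (p * w - f w)) :=
    (hp.mul tendsto_const_nhds).sub tendsto_const_nhds
  exact le_of_tendsto_of_tendsto' hR hL fun k => (hmem k).2 w hw

lemma demand_top {K : NNReal} (hK : LipschitzOnWith K f (Icc (0:ℝ) G)) (hG : 0 ≤ G)
    {p : ℝ} (hp : (K:ℝ) ≤ p) : G ∈ demandSet f G p := by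
  refine ⟨right_mem_Icc.2 hG, fun w hw => ?_⟩
  have hd := hK.dist_le_mul G (right_mem_Icc.2 hG) w hw
  rw [Real.dist_eq, Real.dist_eq] at hd
  have h1 : f w - f G ≤ |f G - f w| := by rw [abs_sub_comm]; exact le_abs_self _
  have h2 : |G - w| = G - w := abs_of_nonneg (by linarith [hw.2])
  rw [h2] at hd
  have h3 : f G - f w ≤ |f G - f w| := le_abs_self _
  have h4 : (K:ℝ) * (G - w) ≤ p * (G - w) :=
    mul_le_mul_of_nonneg_right hp (sub_nonneg.2 hw.2)
  linarith

lemma demand_sSup_top {K : NNReal} (hK : LipschitzOnWith K f (Icc (0:ℝ) G)) (hG : 0 ≤ G)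
    {p : ℝ} (hp : (K:ℝ) ≤ p) : sSup (demandSet f G p) = G :=
  le_antisymm (csSup_le ⟨G, demand_top hK hG hp⟩ fun z hz => hz.1.2)
    (le_csSup (demand_bddAbove p) (demand_top hK hG hp))

lemma demand_bot {K : NNReal} (hK : LipschitzOnWith K f (Icc (0:ℝ) G))
    {p : ℝ} (hp : p < -(K:ℝ)) {z : ℝ} (hz : z ∈ demandSet f G p) : z = 0 := by
  by_contra hne
  have hzpos : 0 < z := lt_of_le_of_ne hz.1.1 (Ne.symm hne)
  have h0 : (0:ℝ) ∈ Icc (0:ℝ) G := left_mem_Icc.2 (le_trans hz.1.1 hz.1.2)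
  have h := hz.2 0 h0
  have hd := hK.dist_le_mul z hz.1 0 h0
  rw [Real.dist_eq, Real.dist_eq] at hd
  have h1 : f 0 - f z ≤ |f z - f 0| := by rw [abs_sub_comm]; exact le_abs_self _
  have h2 : |z - 0| = z := by rw [sub_zero]; exact abs_of_pos hzpos
  rw [h2] at hd
  nlinarith

lemma demand_sSup_bot {K : NNReal} (hG : 0 ≤ G) (hf : ContinuousOn f (Icc 0 G))
    (hK : LipschitzOnWith K f (Icc (0:ℝ) G))
    {p : ℝ} (hp : p < -(K:ℝ)) : sSup (demandSet f G p) = 0 := by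
  have h : demandSet f G p = {0} := by
    apply Subset.antisymm
    · exact fun z hz => demand_bot hK hp hz
    · obtain ⟨z, hz⟩ := demand_nonempty hG hf p
      have := demand_bot hK hp hz
      subst this
      exact fun w hw => by rw [mem_singleton_iff] at hw; rwa [hw]
  rw [h, csSup_singleton]

end helpers

/-- the infimum price `p' = inf {p : ∑ᵢ sup Dᵢ(p) ≥ y}` is well defined
(the set is nonempty and bounded below) and supports the demand `y`. -/
theorem inf_price_supports (G : ℝ) (hG : 0 < G) (n : ℕ) (hn : 1 ≤ n)
    (f : Fin n → ℝ → ℝ)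
    (hconv : ∀ i, ConvexOn ℝ (Set.Icc (0 : ℝ) G) (f i))
    (hlip : ∀ i, ∃ K : NNReal, LipschitzOnWith K (f i) (Set.Icc (0 : ℝ) G))
    (y : ℝ) (hy0 : 0 < y) (hyn : y ≤ n * G) :
    ({p : ℝ | y ≤ ∑ i, sSup (demandSet (f i) G p)}).Nonempty ∧
    BddBelow {p : ℝ | y ≤ ∑ i, sSup (demandSet (f i) G p)} ∧
    ∃ z : Fin n → ℝ,
      (∀ i, z i ∈ demandSet (f i) G (sInf {p : ℝ | y ≤ ∑ i, sSup (demandSet (f i) G p)})) ∧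
      ∑ i, z i = y := by
  classical
  set S := {p : ℝ | y ≤ ∑ i, sSup (demandSet (f i) G p)} with hS
  choose K hK using hlip
  set Km : NNReal := Finset.univ.sup K with hKm
  have hKi : ∀ i, LipschitzOnWith Km (f i) (Icc (0:ℝ) G) := fun i x hx y hy =>
    le_trans (hK i hx hy) (mul_le_mul_left
      (ENNReal.coe_le_coe.2 (Finset.le_sup (Finset.mem_univ i))) _)
  have hfc : ∀ i, ContinuousOn (f i) (Icc (0:ℝ) G) := fun i => (hKi i).continuousOn
  have hG' : (0:ℝ) ≤ G := hG.le
  have hne : S.Nonempty := by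
    refine ⟨(Km : ℝ), ?_⟩
    simp only [hS, mem_setOf_eq]
    have hval : ∀ i, sSup (demandSet (f i) G (Km:ℝ)) = G := fun i =>
      demand_sSup_top (hKi i) hG' le_rfl
    rw [Finset.sum_congr rfl (fun i _ => hval i)]
    simpa [Finset.sum_const, nsmul_eq_mul] using hyn
  have hbdd : BddBelow S := by
    refine ⟨-(Km:ℝ), fun p hp => ?_⟩
    by_contra hlt
    push_neg at hlt
    have hval : ∀ i, sSup (demandSet (f i) G p) = 0 := fun i =>
      demand_sSup_bot hG' (hfc i) (hKi i) hlt
    have : y ≤ 0 := by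
      have := hp
      simp only [hS, mem_setOf_eq] at this
      rwa [Finset.sum_congr rfl (fun i _ => hval i), Finset.sum_const, smul_zero] at this
    linarith
  refine ⟨hne, hbdd, ?_⟩
  set p' := sInf S with hp'
  have hseq : Tendsto (fun k : ℕ => 1/((k:ℝ)+1)) atTop (nhds 0) :=
    tendsto_one_div_add_atTop_nhds_zero_nat
  have hpos : ∀ k : ℕ, (0:ℝ) < 1/((k:ℝ)+1) := fun k => by positivity
  -- upper bound : y ≤ ∑ sSup D_i(p')
  have hub : y ≤ ∑ i, sSup (demandSet (f i) G p') := by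
    set q : ℕ → ℝ := fun k => p' + 1/((k:ℝ)+1) with hq
    have hqt : Tendsto q atTop (nhds p') := by
      have h := Tendsto.add (tendsto_const_nhds (x := p') (f := atTop)) hseq
      simpa [hq, one_div] using h
    set Z : Fin n → ℕ → ℝ := fun i k => sSup (demandSet (f i) G (q k)) with hZ
    have hanti : ∀ i, Antitone (Z i) := by
      intro i k m hkm
      apply demand_sSup_mono hG' (hfc i)
      have h1 : 1/((m:ℝ)+1) ≤ 1/((k:ℝ)+1) :=
        one_div_le_one_div_of_le (by positivity) (by exact_mod_cast by linarith)
      simp only [hq]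
      linarith
    have hbb : ∀ i, BddBelow (Set.range (Z i)) := fun i =>
      ⟨0, fun x ⟨k, hk⟩ => hk ▸ ((demand_sSup_mem hG' (hfc i) (q k)).1.1)⟩
    set L : Fin n → ℝ := fun i => ⨅ k, Z i k with hL
    have hZt : ∀ i, Tendsto (Z i) atTop (nhds (L i)) := fun i =>
      tendsto_atTop_ciInf (hanti i) (hbb i)
    have hLmem : ∀ i, L i ∈ demandSet (f i) G p' := fun i =>
      demand_limit (hfc i) hqt (hZt i) (fun k => demand_sSup_mem hG' (hfc i) (q k))
    have hsum : Tendsto (fun k => ∑ i, Z i k) atTop (nhds (∑ i, L i)) :=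
      tendsto_finset_sum _ (fun i _ => hZt i)
    have hyk : ∀ k, y ≤ ∑ i, Z i k := by
      intro k
      obtain ⟨r, hrS, hrlt⟩ := exists_lt_of_csInf_lt hne
        (show sInf S < q k from lt_add_of_pos_right _ (hpos k))
      have hrS' : y ≤ ∑ i, sSup (demandSet (f i) G r) := hrS
      calc y ≤ ∑ i, sSup (demandSet (f i) G r) := hrS'
        _ ≤ ∑ i, Z i k := Finset.sum_le_sum fun i _ => demand_sSup_mono hG' (hfc i) hrlt.le
    have hyL : y ≤ ∑ i, L i := ge_of_tendsto' hsum hyk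
    calc y ≤ ∑ i, L i := hyL
      _ ≤ ∑ i, sSup (demandSet (f i) G p') :=
        Finset.sum_le_sum fun i _ => le_csSup (demand_bddAbove _) (hLmem i)
  -- lower bound : ∑ sInf D_i(p') ≤ y
  have hlb : ∑ i, sInf (demandSet (f i) G p') ≤ y := by
    set q : ℕ → ℝ := fun k => p' - 1/((k:ℝ)+1) with hq
    have hqt : Tendsto q atTop (nhds p') := by
      have h := Tendsto.sub (tendsto_const_nhds (x := p') (f := atTop)) hseq
      simpa [hq, one_div] using h
    set Z : Fin n → ℕ → ℝ := fun i k => sSup (demandSet (f i) G (q k)) with hZ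
    have hmono : ∀ i, Monotone (Z i) := by
      intro i k m hkm
      apply demand_sSup_mono hG' (hfc i)
      have h1 : 1/((m:ℝ)+1) ≤ 1/((k:ℝ)+1) :=
        one_div_le_one_div_of_le (by positivity) (by exact_mod_cast by linarith)
      simp only [hq]
      linarith
    have hba : ∀ i, BddAbove (Set.range (Z i)) := fun i =>
      ⟨G, fun x ⟨k, hk⟩ => hk ▸ ((demand_sSup_mem hG' (hfc i) (q k)).1.2)⟩
    set L : Fin n → ℝ := fun i => ⨆ k, Z i k with hL
    have hZt : ∀ i, Tendsto (Z i) atTop (nhds (L i)) := fun i =>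
      tendsto_atTop_ciSup (hmono i) (hba i)
    have hLmem : ∀ i, L i ∈ demandSet (f i) G p' := fun i =>
      demand_limit (hfc i) hqt (hZt i) (fun k => demand_sSup_mem hG' (hfc i) (q k))
    have hsum : Tendsto (fun k => ∑ i, Z i k) atTop (nhds (∑ i, L i)) :=
      tendsto_finset_sum _ (fun i _ => hZt i)
    have hyk : ∀ k, ∑ i, Z i k ≤ y := by
      intro k
      have hqk : q k ∉ S := notMem_of_lt_csInf (sub_lt_self _ (hpos k)) hbdd
      have : ¬ y ≤ ∑ i, sSup (demandSet (f i) G (q k)) := hqk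
      exact le_of_not_ge this
    have hLy : ∑ i, L i ≤ y := le_of_tendsto' hsum hyk
    calc ∑ i, sInf (demandSet (f i) G p')
        ≤ ∑ i, L i := Finset.sum_le_sum fun i _ => csInf_le (demand_bddBelow _) (hLmem i)
      _ ≤ y := hLy
  -- construct z
  set a : Fin n → ℝ := fun i => sInf (demandSet (f i) G p') with ha
  set b : Fin n → ℝ := fun i => sSup (demandSet (f i) G p') with hb
  have hsab : ∑ i, a i ≤ ∑ i, b i :=
    Finset.sum_le_sum fun i _ => csInf_le_csSup (demand_nonempty hG' (hfc i) _)
      (demand_bddBelow _) (demand_bddAbove _)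
  rcases eq_or_lt_of_le hsab with heq | hlt'
  · exact ⟨a, fun i => demand_sInf_mem hG' (hfc i) p', by linarith⟩
  · set t : ℝ := (y - ∑ i, a i) / (∑ i, b i - ∑ i, a i) with ht
    have ht0 : 0 ≤ t := div_nonneg (by linarith) (by linarith)
    have ht1 : t ≤ 1 := (div_le_one (by linarith)).2 (by linarith)
    refine ⟨fun i => (1 - t) * a i + t * b i, fun i => ?_, ?_⟩
    · have hc := demand_convex (hconv i) p' (demand_sInf_mem hG' (hfc i) p')
        (demand_sSup_mem hG' (hfc i) p') (by linarith : (0:ℝ) ≤ 1 - t) ht0 (by ring)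
      simpa [smul_eq_mul] using hc
    · have hkey : t * (∑ i, b i - ∑ i, a i) = y - ∑ i, a i := by
        rw [ht]; exact div_mul_cancel₀ _ (ne_of_gt (sub_pos.2 hlt'))
      have hexp : ∑ i, ((1 - t) * a i + t * b i)
          = (1 - t) * ∑ i, a i + t * ∑ i, b i := by
        rw [Finset.sum_add_distrib, Finset.mul_sum, Finset.mul_sum]
      rw [hexp]
      linear_combination hkey
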